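/- Let X ⊆ ℝ^n be convex, u : ℝ^n → ℝ convex and differentiable, and g_1, …, g_m : ℝ^n → ℝ differentiable with g_j being (μ_j, q_j)-uniformly convex (μ_j ≥ 0, q_j ≥ 1). Let h : ℝ^m → ℝ be convex, componentwise nondecreasing, and differentiable with L_h-Lipschitz gradient for some L_h > 0, and let h* be its Fenchel conjugate. Let x⋆ ∈ X, set g = (g_1, …, g_m) and λ⋆ = ∇h(g(x⋆)), assume Σ_j λ⋆_j μ_j > 0, and assume first-order optimality: ⟨∇u(x⋆) + Σ_j λ⋆_j ∇g_j(x⋆), x − x⋆⟩ ≥ 0 for all x ∈ X. Let ε > 0 and let μ_ε > 0 be the unique positive solution of μ/2 = Σ_{j=1}^m λ⋆_j (μ_j/(q_j+1)) (ε/μ)^{(q_j−1)/2}. Then for all x ∈ X and all λ ∈ dom h*: [⟨λ⋆, g(x)⟩ − h*(λ⋆) + u(x)] − [⟨λ, g(x⋆)⟩ − h*(λ) + u(x⋆)] ≥ (μ_ε/2)‖x − x⋆‖² + (1/(2L_h))‖λ − λ⋆‖² − ε/2. -/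

import Mathlib

open scoped RealInnerProductSpace BigOperators


lemma lineHasDerivAt {k : ℕ} {f : EuclideanSpace ℝ (Fin k) → ℝ} {p gp : EuclideanSpace ℝ (Fin k)}
    (hf : HasGradientAt f gp p) (z d : EuclideanSpace ℝ (Fin k)) (t : ℝ)
    (hp : z + t • d = p) : HasDerivAt (fun s : ℝ => f (z + s • d)) ⟪gp, d⟫ t := by
  subst hp
  have hline : HasDerivAt (fun s : ℝ => z + s • d) d t := by
    simpa using ((hasDerivAt_id t).smul_const d).const_add z
  have hfd := hasGradientAt_iff_hasFDerivAt.mp hf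
  have := hfd.comp_hasDerivAt t hline
  simpa [InnerProductSpace.toDual_apply_apply, Function.comp_def] using this

lemma convexOn_line {k : ℕ} {f : EuclideanSpace ℝ (Fin k) → ℝ}
    (hf : ConvexOn ℝ Set.univ f) (z d : EuclideanSpace ℝ (Fin k)) :
    ConvexOn ℝ Set.univ (fun t : ℝ => f (z + t • d)) := by
  refine ⟨convex_univ, ?_⟩
  intro t1 _ t2 _ a b ha hb hab
  have key : z + (a * t1 + b * t2) • d = a • (z + t1 • d) + b • (z + t2 • d) := by
    have h1 : a • z + b • z = z := by rw [← add_smul, hab, one_smul]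
    calc z + (a * t1 + b * t2) • d = (a • z + b • z) + ((a * t1) • d + (b * t2) • d) := by
          rw [h1, add_smul]
      _ = a • (z + t1 • d) + b • (z + t2 • d) := by
          rw [smul_add, smul_add, smul_smul, smul_smul]; abel
  have := hf.2 (Set.mem_univ (z + t1 • d)) (Set.mem_univ (z + t2 • d)) ha hb hab
  simpa [smul_eq_mul, key] using this

lemma grad_lower {k : ℕ} {f : EuclideanSpace ℝ (Fin k) → ℝ}
    (hconv : ConvexOn ℝ Set.univ f) {x gx : EuclideanSpace ℝ (Fin k)}
    (hgrad : HasGradientAt f gx x) (y : EuclideanSpace ℝ (Fin k)) :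
    f x + ⟪gx, y - x⟫ ≤ f y := by
  set d := y - x with hd
  have hψ := convexOn_line hconv x d
  have hder : HasDerivAt (fun s : ℝ => f (x + s • d)) ⟪gx, d⟫ 0 :=
    lineHasDerivAt hgrad x d 0 (by simp)
  have hsl := hψ.le_slope_of_hasDerivAt (Set.mem_univ (0:ℝ)) (Set.mem_univ (1:ℝ))
    zero_lt_one hder
  rw [slope_def_field] at hsl
  have h1 : x + (1:ℝ) • d = y := by rw [one_smul, hd]; abel
  have h0 : x + (0:ℝ) • d = x := by simp
  rw [h1, h0] at hsl
  have : ⟪gx, d⟫ ≤ f y - f x := by simpa using hsl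
  linarith

lemma mono_grad_nonneg {k : ℕ} {f : EuclideanSpace ℝ (Fin k) → ℝ}
    {z gz : EuclideanSpace ℝ (Fin k)}
    (hmono : ∀ a b : EuclideanSpace ℝ (Fin k), (∀ j, a j ≤ b j) → f a ≤ f b)
    (hgrad : HasGradientAt f gz z) (j : Fin k) : 0 ≤ gz j := by
  set d : EuclideanSpace ℝ (Fin k) := EuclideanSpace.single j (1:ℝ) with hdd
  have hder : HasDerivAt (fun s : ℝ => f (z + s • d)) ⟪gz, d⟫ 0 :=
    lineHasDerivAt hgrad z d 0 (by simp)
  have hinner : ⟪gz, d⟫ = gz j := by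
    simp [hdd, EuclideanSpace.inner_single_right]
  have hψmono : Monotone (fun s : ℝ => f (z + s • d)) := by
    intro a b hab
    apply hmono
    intro i
    have : (z + a • d) i = z i + a * d i := rfl
    have h2 : (z + b • d) i = z i + b * d i := rfl
    rw [this, h2]
    have hdi : 0 ≤ d i := by
      rw [hdd]; rw [EuclideanSpace.single_apply]; split <;> norm_num
    nlinarith
  rw [← hinner]
  have ht : Filter.Tendsto (slope (fun s : ℝ => f (z + s • d)) 0) (nhdsWithin 0 (Set.Ioi 0))
      (nhds ⟪gz, d⟫) :=
    (hasDerivAt_iff_tendsto_slope.mp hder).mono_left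
      (nhdsWithin_mono 0 (fun t ht => ne_of_gt ht))
  refine ge_of_tendsto ht ?_
  filter_upwards [self_mem_nhdsWithin] with t ht
  rw [slope_def_field]
  apply div_nonneg
  · have := hψmono (le_of_lt ht)
    simpa using sub_nonneg.mpr this
  · simpa using le_of_lt ht

lemma smooth_upper {k : ℕ} {f : EuclideanSpace ℝ (Fin k) → ℝ}
    {f' : EuclideanSpace ℝ (Fin k) → EuclideanSpace ℝ (Fin k)}
    (hgrad : ∀ z, HasGradientAt f (f' z) z) {L : ℝ}
    (hLip : ∀ z w, ‖f' z - f' w‖ ≤ L * ‖z - w‖) (z w : EuclideanSpace ℝ (Fin k)) :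
    f w ≤ f z + ⟪f' z, w - z⟫ + L / 2 * ‖w - z‖ ^ 2 := by
  set d := w - z with hd
  have hC : Continuous f' := by
    apply LipschitzWith.continuous (K := Real.toNNReal L)
    apply LipschitzWith.of_dist_le_mul
    intro a b
    rw [dist_eq_norm, dist_eq_norm]
    calc ‖f' a - f' b‖ ≤ L * ‖a - b‖ := hLip a b
      _ ≤ Real.toNNReal L * ‖a - b‖ := by
          apply mul_le_mul_of_nonneg_right _ (norm_nonneg _)
          exact Real.le_coe_toNNReal L
  have key : ∀ t : ℝ, HasDerivAt (fun s : ℝ => f (z + s • d)) ⟪f' (z + t • d), d⟫ t :=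
    fun t => lineHasDerivAt (hgrad _) z d t rfl
  have hφc : Continuous fun t : ℝ => ⟪f' (z + t • d), d⟫ := by
    apply Continuous.inner _ continuous_const
    exact hC.comp (by continuity)
  have hg2 : Continuous fun t : ℝ => ⟪f' z, d⟫ + L * ‖d‖ ^ 2 * t := by continuity
  have hint : (∫ t in (0:ℝ)..1, ⟪f' (z + t • d), d⟫) = f (z + (1:ℝ) • d) - f (z + (0:ℝ) • d) :=
    intervalIntegral.integral_eq_sub_of_hasDerivAt (fun t _ => key t)
      (hφc.intervalIntegrable 0 1)
  have hmono : (∫ t in (0:ℝ)..1, ⟪f' (z + t • d), d⟫)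
      ≤ ∫ t in (0:ℝ)..1, (⟪f' z, d⟫ + L * ‖d‖ ^ 2 * t) := by
    apply intervalIntegral.integral_mono_on zero_le_one (hφc.intervalIntegrable 0 1)
      (hg2.intervalIntegrable 0 1)
    intro t ht
    have heq : ⟪f' (z + t • d), d⟫ - ⟪f' z, d⟫ = ⟪f' (z + t • d) - f' z, d⟫ :=
      (inner_sub_left _ _ _).symm
    have h2 : ⟪f' (z + t • d) - f' z, d⟫ ≤ ‖f' (z + t • d) - f' z‖ * ‖d‖ :=
      real_inner_le_norm _ _
    have h3 : ‖f' (z + t • d) - f' z‖ ≤ L * ‖t • d‖ := by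
      have := hLip (z + t • d) z
      simpa using this
    have h4 : ‖t • d‖ = t * ‖d‖ := by
      rw [norm_smul, Real.norm_eq_abs, abs_of_nonneg ht.1]
    have h5 : ‖f' (z + t • d) - f' z‖ * ‖d‖ ≤ L * (t * ‖d‖) * ‖d‖ := by
      rw [← h4]; exact mul_le_mul_of_nonneg_right h3 (norm_nonneg d)
    have h6 : L * (t * ‖d‖) * ‖d‖ = L * ‖d‖ ^ 2 * t := by ring
    linarith
  have hval : (∫ t in (0:ℝ)..1, (⟪f' z, d⟫ + L * ‖d‖ ^ 2 * t)) = ⟪f' z, d⟫ + L / 2 * ‖d‖ ^ 2 := by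
    rw [intervalIntegral.integral_add (intervalIntegrable_const)
      ((by continuity : Continuous fun t : ℝ => L * ‖d‖ ^ 2 * t).intervalIntegrable 0 1)]
    rw [intervalIntegral.integral_const]
    rw [intervalIntegral.integral_const_mul]
    rw [integral_id]
    simp [smul_eq_mul]
    ring
  have h1 : z + (1:ℝ) • d = w := by rw [one_smul, hd]; abel
  have h0 : z + (0:ℝ) • d = z := by simp
  rw [h1, h0] at hint
  rw [hval] at hmono
  linarith [hint ▸ hmono]

lemma key_pow {r s q : ℝ} (hr : 0 ≤ r) (hs : 0 < s) (hq : 1 ≤ q) :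
    s ^ ((q - 1) / 2) * r ^ 2 ≤ r ^ (q + 1) + s ^ ((q + 1) / 2) := by
  have hq1 : (0:ℝ) < q + 1 := by linarith
  have hw₁ : 0 ≤ (q - 1) / (q + 1) := div_nonneg (by linarith) hq1.le
  have hw₂ : 0 ≤ 2 / (q + 1) := div_nonneg (by norm_num) hq1.le
  have hsum : (q - 1) / (q + 1) + 2 / (q + 1) = 1 := by field_simp; ring
  have hp₁ : 0 ≤ s ^ ((q + 1) / 2) := Real.rpow_nonneg hs.le _
  have hp₂ : 0 ≤ r ^ (q + 1) := Real.rpow_nonneg hr _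
  have hgm := Real.geom_mean_le_arith_mean2_weighted hw₁ hw₂ hp₁ hp₂ hsum
  have e1 : (s ^ ((q + 1) / 2)) ^ ((q - 1) / (q + 1)) = s ^ ((q - 1) / 2) := by
    rw [← Real.rpow_mul hs.le]
    congr 1
    field_simp
  have e2 : (r ^ (q + 1)) ^ (2 / (q + 1)) = r ^ 2 := by
    rw [← Real.rpow_mul hr]
    have : (q + 1) * (2 / (q + 1)) = (2:ℝ) := by field_simp
    rw [this]
    rw [show ((2:ℝ) = ((2:ℕ):ℝ)) by norm_num, Real.rpow_natCast]
  rw [e1, e2] at hgm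
  have hb₁ : (q - 1) / (q + 1) * s ^ ((q + 1) / 2) ≤ s ^ ((q + 1) / 2) := by
    apply mul_le_of_le_one_left hp₁
    rw [div_le_one hq1]; linarith
  have hb₂ : 2 / (q + 1) * r ^ (q + 1) ≤ r ^ (q + 1) := by
    apply mul_le_of_le_one_left hp₂
    rw [div_le_one hq1]; linarith
  linarith

/-- Fenchel conjugate of a real-valued function on `ℝ^m`, valued in `EReal`. -/
noncomputable def fenchelConjR {m : ℕ} (h : EuclideanSpace ℝ (Fin m) → ℝ)
    (s : EuclideanSpace ℝ (Fin m)) : EReal :=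
  ⨆ z : EuclideanSpace ℝ (Fin m), ((⟪s, z⟫ - h z : ℝ) : EReal)

/-- Quadratic growth of the gap function via the Approximate Dualized Aggregate convexity
constant `μ_ε`: under the hypotheses of the growth lemma and with `μ_ε > 0` the (unique)
positive solution of `μ/2 = Σ_j λ⋆_j (μ_j/(q_j+1)) (ε/μ)^{(q_j−1)/2}`, the gap
`[⟨λ⋆, g(x)⟩ − h*(λ⋆) + u(x)] − [⟨λ, g(x⋆)⟩ − h*(λ) + u(x⋆)]` is at least
`(μ_ε/2)‖x − x⋆‖² + (1/(2L_h))‖λ − λ⋆‖² − ε/2`. -/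
theorem stmt15 {n m : ℕ}
    (X : Set (EuclideanSpace ℝ (Fin n))) (hX : Convex ℝ X)
    (u : EuclideanSpace ℝ (Fin n) → ℝ)
    (u' : EuclideanSpace ℝ (Fin n) → EuclideanSpace ℝ (Fin n))
    (huconv : ConvexOn ℝ Set.univ u) (hu' : ∀ x, HasGradientAt u (u' x) x)
    (g : Fin m → EuclideanSpace ℝ (Fin n) → ℝ)
    (g' : Fin m → EuclideanSpace ℝ (Fin n) → EuclideanSpace ℝ (Fin n))
    (hg' : ∀ j x, HasGradientAt (g j) (g' j x) x)
    (μ q : Fin m → ℝ) (hμ : ∀ j, 0 ≤ μ j) (hq : ∀ j, 1 ≤ q j)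
    (huc : ∀ j x y, g j x + ⟪g' j x, y - x⟫ + μ j / (q j + 1) * ‖y - x‖ ^ (q j + 1) ≤ g j y)
    (h : EuclideanSpace ℝ (Fin m) → ℝ)
    (h' : EuclideanSpace ℝ (Fin m) → EuclideanSpace ℝ (Fin m))
    (hhconv : ConvexOn ℝ Set.univ h)
    (hhmono : ∀ z w : EuclideanSpace ℝ (Fin m), (∀ j, z j ≤ w j) → h z ≤ h w)
    (hh' : ∀ z, HasGradientAt h (h' z) z)
    (Lh : ℝ) (hLh : 0 < Lh) (hhLip : ∀ z w, ‖h' z - h' w‖ ≤ Lh * ‖z - w‖)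
    (xstar : EuclideanSpace ℝ (Fin n)) (hxstar : xstar ∈ X)
    (gvec : EuclideanSpace ℝ (Fin n) → EuclideanSpace ℝ (Fin m))
    (hgvec : ∀ x j, gvec x j = g j x)
    (lamstar : EuclideanSpace ℝ (Fin m)) (hlamstar : lamstar = h' (gvec xstar))
    (hμsum : 0 < ∑ j, lamstar j * μ j)
    (hopt : ∀ x ∈ X, 0 ≤ ⟪u' xstar + ∑ j, lamstar j • g' j xstar, x - xstar⟫)
    (ε με : ℝ) (hε : 0 < ε) (hμε : 0 < με)
    (hμεeq : με / 2 = ∑ j, lamstar j * (μ j / (q j + 1)) * (ε / με) ^ ((q j - 1) / 2)) :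
    ∀ x ∈ X, ∀ lam : EuclideanSpace ℝ (Fin m), fenchelConjR h lam < ⊤ →
      ((με / 2 * ‖x - xstar‖ ^ 2 + 1 / (2 * Lh) * ‖lam - lamstar‖ ^ 2 - ε / 2 : ℝ) : EReal)
        ≤ (((⟪lamstar, gvec x⟫ : ℝ) : EReal) - fenchelConjR h lamstar + (u x : EReal))
          - (((⟪lam, gvec xstar⟫ : ℝ) : EReal) - fenchelConjR h lam + (u xstar : EReal)) := by
  intro x hx lam hlamtop
  have hlamnn : ∀ j, 0 ≤ lamstar j := fun j => by
    rw [hlamstar]; exact mono_grad_nonneg hhmono (hh' (gvec xstar)) j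
  have hgradstar : HasGradientAt h lamstar (gvec xstar) := hlamstar ▸ hh' (gvec xstar)
  -- Step B: value of the conjugate at lamstar
  have hBle : ∀ w, ⟪lamstar, w⟫ - h w ≤ ⟪lamstar, gvec xstar⟫ - h (gvec xstar) := by
    intro w
    have h1 := grad_lower hhconv hgradstar w
    have hi : ⟪lamstar, w - gvec xstar⟫ = ⟪lamstar, w⟫ - ⟪lamstar, gvec xstar⟫ :=
      inner_sub_right _ _ _
    linarith [hi ▸ h1]
  have hstar : fenchelConjR h lamstar
      = ((⟪lamstar, gvec xstar⟫ - h (gvec xstar) : ℝ) : EReal) := by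
    apply le_antisymm
    · exact iSup_le fun w => EReal.coe_le_coe_iff.mpr (hBle w)
    · exact le_iSup (fun z : EuclideanSpace ℝ (Fin m) => ((⟪lamstar, z⟫ - h z : ℝ) : EReal))
        (gvec xstar)
  -- Step C: the conjugate at lam is a real number t
  set F := fenchelConjR h lam with hF
  have hFbot : F ≠ ⊥ := by
    have hle : ((⟪lam, (0 : EuclideanSpace ℝ (Fin m))⟫ - h 0 : ℝ) : EReal) ≤ F :=
      le_iSup (fun z : EuclideanSpace ℝ (Fin m) => ((⟪lam, z⟫ - h z : ℝ) : EReal)) 0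
    intro hb
    rw [hb, le_bot_iff] at hle
    exact EReal.coe_ne_bot _ hle
  set t := F.toReal with htdef
  have hFt : F = (t : EReal) := (EReal.coe_toReal (ne_of_lt hlamtop) hFbot).symm
  have ht_ge : ∀ w, ⟪lam, w⟫ - h w ≤ t := by
    intro w
    have hle : ((⟪lam, w⟫ - h w : ℝ) : EReal) ≤ F :=
      le_iSup (fun z : EuclideanSpace ℝ (Fin m) => ((⟪lam, z⟫ - h z : ℝ) : EReal)) w
    rw [hFt] at hle
    exact EReal.coe_le_coe_iff.mp hle
  -- Step D: strong convexity of the conjugate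
  have hD : ⟪lam, gvec xstar⟫ - h (gvec xstar) + 1 / (2 * Lh) * ‖lam - lamstar‖ ^ 2 ≤ t := by
    set zs := gvec xstar with hzs
    set v := lam - lamstar with hv
    set w0 := zs + Lh⁻¹ • v with hw0def
    have hsm := smooth_upper hh' hhLip zs w0
    have hw0 : w0 - zs = Lh⁻¹ • v := by rw [hw0def]; abel
    have hn : ‖w0 - zs‖ ^ 2 = Lh⁻¹ ^ 2 * ‖v‖ ^ 2 := by
      rw [hw0, norm_smul, Real.norm_eq_abs, abs_of_nonneg (inv_nonneg.mpr hLh.le)]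
      ring
    have hi1 : ⟪h' zs, w0 - zs⟫ = Lh⁻¹ * ⟪lamstar, v⟫ := by
      rw [hw0, real_inner_smul_right, ← hlamstar]
    have hi2 : ⟪lam, w0⟫ = ⟪lam, zs⟫ + Lh⁻¹ * ⟪lam, v⟫ := by
      rw [hw0def, inner_add_right, real_inner_smul_right]
    have hA := ht_ge w0
    rw [hi2] at hA
    rw [hi1, hn] at hsm
    have hvv : ⟪lam, v⟫ - ⟪lamstar, v⟫ = ‖v‖ ^ 2 := by
      rw [← inner_sub_left, ← hv, real_inner_self_eq_norm_sq]
    have hvv' : Lh⁻¹ * ⟪lam, v⟫ - Lh⁻¹ * ⟪lamstar, v⟫ = Lh⁻¹ * ‖v‖ ^ 2 := by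
      rw [← mul_sub, hvv]
    have hfin : Lh⁻¹ * ‖v‖ ^ 2 - Lh / 2 * (Lh⁻¹ ^ 2 * ‖v‖ ^ 2) = 1 / (2 * Lh) * ‖v‖ ^ 2 := by
      field_simp
      ring
    linarith
  -- Step E: primal growth
  set r := ‖x - xstar‖ with hr
  have hru : u xstar + ⟪u' xstar, x - xstar⟫ ≤ u x := grad_lower huconv (hu' xstar) x
  have hinner_sum : ∀ a b : EuclideanSpace ℝ (Fin m), ⟪a, b⟫ = ∑ j, a j * b j := by
    intro a b
    simp [PiLp.inner_apply, RCLike.inner_apply, conj_trivial]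
    exact Finset.sum_congr rfl fun j _ => mul_comm _ _
  have hinL : ⟪lamstar, gvec x⟫ - ⟪lamstar, gvec xstar⟫
      = ∑ j, lamstar j * g j x - ∑ j, lamstar j * g j xstar := by
    rw [hinner_sum, hinner_sum]
    congr 1 <;> exact Finset.sum_congr rfl fun j _ => by rw [hgvec]
  have hinOpt : ⟪u' xstar + ∑ j, lamstar j • g' j xstar, x - xstar⟫
      = ⟪u' xstar, x - xstar⟫ + ∑ j, lamstar j * ⟪g' j xstar, x - xstar⟫ := by
    rw [inner_add_left, sum_inner]
    congr 1
    exact Finset.sum_congr rfl fun j _ => real_inner_smul_left _ _ _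
  have hE1 : ∑ j, lamstar j * (μ j / (q j + 1) * r ^ (q j + 1))
      ≤ (⟪lamstar, gvec x⟫ - ⟪lamstar, gvec xstar⟫) + (u x - u xstar) := by
    have hopt' := hopt x hx
    rw [hinOpt] at hopt'
    have hsum : ∑ j, lamstar j * (g j xstar + ⟪g' j xstar, x - xstar⟫
        + μ j / (q j + 1) * r ^ (q j + 1)) ≤ ∑ j, lamstar j * g j x :=
      Finset.sum_le_sum fun j _ => mul_le_mul_of_nonneg_left (huc j xstar x) (hlamnn j)
    simp only [mul_add] at hsum
    rw [Finset.sum_add_distrib, Finset.sum_add_distrib] at hsum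
    rw [hinL]
    linarith
  have hE2 : με / 2 * r ^ 2 - ε / 2 ≤ ∑ j, lamstar j * (μ j / (q j + 1) * r ^ (q j + 1)) := by
    set s := ε / με with hss
    have hs : 0 < s := div_pos hε hμε
    have hc : ∀ j, 0 ≤ lamstar j * (μ j / (q j + 1)) := fun j =>
      mul_nonneg (hlamnn j) (div_nonneg (hμ j) (by linarith [hq j]))
    have hper : ∀ j, lamstar j * (μ j / (q j + 1)) * (s ^ ((q j - 1) / 2) * r ^ 2)
        ≤ lamstar j * (μ j / (q j + 1)) * (r ^ (q j + 1) + s ^ ((q j + 1) / 2)) := fun j =>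
      mul_le_mul_of_nonneg_left (key_pow (norm_nonneg _) hs (hq j)) (hc j)
    have hsum := Finset.sum_le_sum fun j (_ : j ∈ Finset.univ) => hper j
    have hL : ∑ j, lamstar j * (μ j / (q j + 1)) * (s ^ ((q j - 1) / 2) * r ^ 2)
        = με / 2 * r ^ 2 := by
      rw [hμεeq, Finset.sum_mul]
      exact Finset.sum_congr rfl fun j _ => by ring
    have hsplit : ∀ j : Fin m, s ^ ((q j + 1) / 2) = s ^ ((q j - 1) / 2) * s := by
      intro j
      rw [show (q j + 1) / 2 = (q j - 1) / 2 + 1 by ring, Real.rpow_add hs, Real.rpow_one]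
    have hR : ∑ j, lamstar j * (μ j / (q j + 1)) * (r ^ (q j + 1) + s ^ ((q j + 1) / 2))
        = (∑ j, lamstar j * (μ j / (q j + 1) * r ^ (q j + 1))) + ε / 2 := by
      have heps : ∑ j, lamstar j * (μ j / (q j + 1)) * s ^ ((q j - 1) / 2) * s = ε / 2 := by
        rw [← Finset.sum_mul, ← hμεeq, hss]
        field_simp
      rw [← heps, ← Finset.sum_add_distrib]
      exact Finset.sum_congr rfl fun j _ => by rw [hsplit j]; ring
    rw [hL, hR] at hsum
    linarith
  -- Step F: assemble
  rw [hstar, hFt]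
  have hcast : (((⟪lamstar, gvec x⟫ : ℝ) : EReal)
        - ((⟪lamstar, gvec xstar⟫ - h (gvec xstar) : ℝ) : EReal) + (u x : EReal))
      - (((⟪lam, gvec xstar⟫ : ℝ) : EReal) - (t : EReal) + (u xstar : EReal))
      = (((⟪lamstar, gvec x⟫ - (⟪lamstar, gvec xstar⟫ - h (gvec xstar)) + u x)
        - (⟪lam, gvec xstar⟫ - t + u xstar) : ℝ) : EReal) := by
    rw [← EReal.coe_sub, ← EReal.coe_add, ← EReal.coe_sub, ← EReal.coe_add, ← EReal.coe_sub]
  rw [hcast]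
  rw [EReal.coe_le_coe_iff]
  linarith
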